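/- The Fejer map φ_M(x) = x − (1/h)Σᵢ ρᵢ⁺(x) is M-Fejerian: for every x ∉ M and every y ∈ M, ‖φ_M(x) − y‖ < ‖x − y‖. -/
import Mathlib


open scoped RealInnerProductSpace
open Classical

/-- The Fejer map `φ_M x = x - (1/h) • Σᵢ ρᵢ⁺ x` is `M`-Fejerian:
for every `x ∉ M` and every `y ∈ M`, `‖φ_M x - y‖ < ‖x - y‖`. -/
theorem stmt4 {n m : ℕ} (a : Fin m → EuclideanSpace ℝ (Fin n))
    (ha : ∀ i, a i ≠ 0) (b : Fin m → ℝ)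
    (M : Set (EuclideanSpace ℝ (Fin n)))
    (hM : M = {x | ∀ i, ⟪a i, x⟫ ≤ b i}) (hne : M.Nonempty)
    (ρ : Fin m → EuclideanSpace ℝ (Fin n) → EuclideanSpace ℝ (Fin n))
    (hρ : ∀ i x, ρ i x = (max (⟪a i, x⟫ - b i) 0 / ‖a i‖ ^ 2) • a i)
    (h : EuclideanSpace ℝ (Fin n) → ℕ)
    (hh : ∀ x, h x = (Finset.univ.filter fun i => ρ i x ≠ 0).card)
    (φ : EuclideanSpace ℝ (Fin n) → EuclideanSpace ℝ (Fin n))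
    (hφ : ∀ x, φ x = if h x = 0 then x else x - ((h x : ℝ))⁻¹ • ∑ i, ρ i x) :
    ∀ x ∉ M, ∀ y ∈ M, ‖φ x - y‖ < ‖x - y‖ := by
  intro x hx y hy
  subst hM
  -- there is a violated constraint
  simp only [Set.mem_setOf_eq, not_forall, not_le] at hx
  obtain ⟨i₀, hi₀⟩ := hx
  have hai : ∀ i, (0:ℝ) < ‖a i‖ ^ 2 := fun i => pow_pos (norm_pos_iff.2 (ha i)) 2
  have hρne : ∀ i, (b i < ⟪a i, x⟫) ↔ ρ i x ≠ 0 := by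
    intro i
    rw [hρ]
    constructor
    · intro hlt
      have hmax : max (⟪a i, x⟫ - b i) 0 = ⟪a i, x⟫ - b i :=
        max_eq_left (by linarith)
      rw [hmax]
      exact smul_ne_zero (ne_of_gt (div_pos (by linarith) (hai i))) (ha i)
    · intro hne'
      by_contra hle
      push_neg at hle
      have hmax : max (⟪a i, x⟫ - b i) 0 = 0 := max_eq_right (by linarith)
      rw [hmax] at hne'
      simp at hne'
  have hρi₀ : ρ i₀ x ≠ 0 := (hρne i₀).1 hi₀
  set S : Finset (Fin m) := Finset.univ.filter fun i => ρ i x ≠ 0 with hS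
  have hi₀S : i₀ ∈ S := by simp [hS, hρi₀]
  have hScard : h x = S.card := hh x
  have hh0 : h x ≠ 0 := by
    rw [hScard]
    exact Finset.card_ne_zero_of_mem hi₀S
  have hhpos : (0:ℝ) < (h x : ℝ) := by positivity
  -- per-index inequality
  have key : ∀ i, ‖ρ i x‖ ^ 2 ≤ ⟪ρ i x, x - y⟫ := by
    intro i
    have hyi : ⟪a i, y⟫ ≤ b i := hy i
    rcases le_or_gt (⟪a i, x⟫) (b i) with hle | hlt
    · have : ρ i x = 0 := by
        rw [hρ, max_eq_right (by linarith)]; simp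
      simp [this]
    · have hmax : max (⟪a i, x⟫ - b i) 0 = ⟪a i, x⟫ - b i :=
        max_eq_left (by linarith)
      set c : ℝ := (⟪a i, x⟫ - b i) / ‖a i‖ ^ 2 with hc
      have hcpos : 0 < c := by
        apply div_pos (by linarith) (hai i)
      have hρi : ρ i x = c • a i := by rw [hρ, hmax]
      rw [hρi, real_inner_smul_left, inner_sub_right]
      have hnorm : ‖c • a i‖ ^ 2 = c ^ 2 * ‖a i‖ ^ 2 := by
        rw [norm_smul]; rw [mul_pow]; simp [sq_abs]
      rw [hnorm]
      have hc2 : c * ‖a i‖ ^ 2 = ⟪a i, x⟫ - b i := by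
        rw [hc, div_mul_cancel₀]
        exact (hai i).ne'
      have : c ^ 2 * ‖a i‖ ^ 2 = c * (⟪a i, x⟫ - b i) := by
        rw [sq, mul_assoc, hc2]
      rw [this]
      apply mul_le_mul_of_nonneg_left _ hcpos.le
      linarith
  set d : EuclideanSpace ℝ (Fin n) := ∑ i, ρ i x with hd
  set T : ℝ := ∑ i, ‖ρ i x‖ ^ 2 with hT
  have hTpos : 0 < T := by
    rw [hT]
    apply Finset.sum_pos' (fun i _ => by positivity)
    exact ⟨i₀, Finset.mem_univ _, pow_pos (norm_pos_iff.2 hρi₀) 2⟩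
  have hinner : T ≤ ⟪d, x - y⟫ := by
    rw [hd, sum_inner, hT]
    exact Finset.sum_le_sum fun i _ => key i
  -- Cauchy-Schwarz–type bound
  have hdsum : d = ∑ i ∈ S, ρ i x := by
    rw [hd]
    refine (Finset.sum_subset (Finset.subset_univ S) ?_).symm
    intro i _ hiS
    by_contra hne'
    exact hiS (by simp [hS, hne'])
  have hTsum : T = ∑ i ∈ S, ‖ρ i x‖ ^ 2 := by
    rw [hT]
    refine (Finset.sum_subset (Finset.subset_univ S) ?_).symm
    intro i _ hiS
    have : ρ i x = 0 := by
      by_contra hne'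
      exact hiS (by simp [hS, hne'])
    simp [this]
  have hnormd : ‖d‖ ^ 2 ≤ (h x : ℝ) * T := by
    calc ‖d‖ ^ 2 ≤ (∑ i ∈ S, ‖ρ i x‖) ^ 2 := by
          apply pow_le_pow_left₀ (norm_nonneg _)
          rw [hdsum]
          exact norm_sum_le _ _
      _ ≤ S.card * ∑ i ∈ S, ‖ρ i x‖ ^ 2 := sq_sum_le_card_mul_sum_sq
      _ = (h x : ℝ) * T := by rw [hScard, hTsum]
  -- main computation
  have hφx : φ x = x - ((h x : ℝ))⁻¹ • d := by rw [hφ, if_neg hh0]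
  have hsq : ‖φ x - y‖ ^ 2 < ‖x - y‖ ^ 2 := by
    have heq : φ x - y = (x - y) - ((h x : ℝ))⁻¹ • d := by
      rw [hφx]; abel
    rw [heq, norm_sub_sq_real, real_inner_smul_right, norm_smul]
    have h1 : ‖((h x : ℝ))⁻¹‖ = ((h x : ℝ))⁻¹ := by
      rw [Real.norm_eq_abs, abs_of_pos (by positivity)]
    rw [h1, mul_pow]
    have h2 : ((h x : ℝ))⁻¹ ^ 2 * ‖d‖ ^ 2 ≤ ((h x : ℝ))⁻¹ * T := by
      rw [sq, mul_assoc]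
      apply mul_le_mul_of_nonneg_left _ (by positivity)
      calc ((h x : ℝ))⁻¹ * ‖d‖ ^ 2 ≤ ((h x : ℝ))⁻¹ * ((h x : ℝ) * T) := by
            apply mul_le_mul_of_nonneg_left hnormd (by positivity)
        _ = T := by field_simp
    have h3 : ((h x : ℝ))⁻¹ * T ≤ ((h x : ℝ))⁻¹ * ⟪d, x - y⟫ :=
      mul_le_mul_of_nonneg_left hinner (by positivity)
    have h4 : 0 < ((h x : ℝ))⁻¹ * T := by positivity
    rw [real_inner_comm d (x - y)]
    linarith [h2, h3, h4]
  exact lt_of_pow_lt_pow_left₀ 2 (norm_nonneg _) hsq
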